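/- Let X be a σ-compact locally compact metric space and let Φ be a function from the set of Borel probability measures on X to ℝ ∪ {−∞}. Define A = sup{ limsup_n Φ(μ_n) : (μ_n) a sequence of probability measures converging vaguely to 0 } and B = lim_{ε → 0} inf_{K compact} sup{ Φ(μ) : μ(K) ≤ ε }. Then A = B, and moreover B equals inf_{K compact} lim_{ε → 0} sup{ Φ(μ) : μ(K) ≤ ε }. -/

import Mathlib

open MeasureTheory Filter Set

private lemma aux_int_le {X : Type*} [MetricSpace X] [MeasurableSpace X] [BorelSpace X]
    (μ : Measure X) [IsProbabilityMeasure μ] {φ : X → ℝ} (hφ : Continuous φ)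
    (hφc : HasCompactSupport φ) {C : ℝ} (hC : ∀ x, ‖φ x‖ ≤ C) :
    ‖∫ y, φ y ∂μ‖ ≤ C * (μ (tsupport φ)).toReal := by
  rw [← setIntegral_eq_integral_of_forall_compl_eq_zero
      (fun x hx => image_eq_zero_of_notMem_tsupport hx)]
  exact norm_setIntegral_le_of_norm_le_const (measure_lt_top μ _)
    (fun x _ => hC x)

/-- The three natural definitions of the "value at infinity" of a functional `Φ` on
probability measures coincide: the sup of limsups along sequences converging vaguely to `0`,
`lim_{ε→0} inf_K sup {Φ(μ) : μ(K) ≤ ε}`, and `inf_K lim_{ε→0} sup {Φ(μ) : μ(K) ≤ ε}`. -/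
theorem stmt13 {X : Type*} [MetricSpace X] [SigmaCompactSpace X] [LocallyCompactSpace X]
    [MeasurableSpace X] [BorelSpace X]
    (Φ : ProbabilityMeasure X → EReal) :
    (sSup {x : EReal | ∃ μ : ℕ → ProbabilityMeasure X,
        (∀ φ : X → ℝ, Continuous φ → HasCompactSupport φ →
          Tendsto (fun n => ∫ y, φ y ∂(μ n : Measure X)) atTop (nhds 0)) ∧
        x = limsup (fun n => Φ (μ n)) atTop}
      = ⨅ (ε : ℝ) (_ : 0 < ε), ⨅ (K : Set X) (_ : IsCompact K),
          ⨆ (μ : ProbabilityMeasure X) (_ : (μ : Measure X) K ≤ ENNReal.ofReal ε), Φ μ) ∧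
    ((⨅ (ε : ℝ) (_ : 0 < ε), ⨅ (K : Set X) (_ : IsCompact K),
          ⨆ (μ : ProbabilityMeasure X) (_ : (μ : Measure X) K ≤ ENNReal.ofReal ε), Φ μ)
      = ⨅ (K : Set X) (_ : IsCompact K), ⨅ (ε : ℝ) (_ : 0 < ε),
          ⨆ (μ : ProbabilityMeasure X) (_ : (μ : Measure X) K ≤ ENNReal.ofReal ε), Φ μ) := by
  refine ⟨le_antisymm ?_ ?_, ?_⟩
  · -- A ≤ B
    refine sSup_le ?_
    rintro x ⟨μ, hμ, rfl⟩
    refine le_iInf₂ fun ε hε => le_iInf₂ fun K hK => ?_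
    obtain ⟨f, hf1, -, hfc, hf01⟩ :=
      exists_continuous_one_zero_of_isCompact hK isClosed_empty (disjoint_empty K)
    have hint := hμ f f.continuous hfc
    have hev : ∀ᶠ n in atTop, ((μ n : Measure X) K) ≤ ENNReal.ofReal ε := by
      filter_upwards [hint.eventually (Iio_mem_nhds hε)] with n hn
      have hmono : ((μ n : Measure X) K).toReal ≤ ∫ y, f y ∂(μ n : Measure X) := by
        rw [← measureReal_def, ← integral_indicator_one hK.measurableSet]
        refine integral_mono ((integrable_const (1 : ℝ)).indicator hK.measurableSet)
          (f.continuous.integrable_of_hasCompactSupport hfc) ?_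
        intro x
        by_cases hx : x ∈ K
        · simp [Set.indicator_of_mem hx, hf1 hx]
        · simp [Set.indicator_of_notMem hx, (hf01 x).1]
      exact (ENNReal.le_ofReal_iff_toReal_le (measure_ne_top _ _) hε.le).2
        (hmono.trans hn.le)
    refine limsup_le_of_le (by isBoundedDefault) ?_
    filter_upwards [hev] with n hn
    exact le_iSup₂ (f := fun (ν : ProbabilityMeasure X)
      (_ : (ν : Measure X) K ≤ ENNReal.ofReal ε) => Φ ν) (μ n) hn
  · -- B ≤ A
    by_contra h
    push_neg at h
    obtain ⟨c, hcA, hcB⟩ := exists_between h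
    set E := CompactExhaustion.choice X with hE
    have H : ∀ n : ℕ, ∃ μ : ProbabilityMeasure X,
        (μ : Measure X) (E n) ≤ ENNReal.ofReal (1 / (n + 1)) ∧ c < Φ μ := by
      intro n
      have h1 : (0 : ℝ) < 1 / (n + 1) := by positivity
      have h2 : c < ⨆ (μ : ProbabilityMeasure X)
          (_ : (μ : Measure X) (E n) ≤ ENNReal.ofReal (1 / (n + 1))), Φ μ :=
        hcB.trans_le ((iInf₂_le _ h1).trans (iInf₂_le _ (E.isCompact n)))
      rw [lt_iSup_iff] at h2
      obtain ⟨μ, hμ⟩ := h2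
      rw [lt_iSup_iff] at hμ
      obtain ⟨h3, h4⟩ := hμ
      exact ⟨μ, h3, h4⟩
    choose μ hμ1 hμ2 using H
    have hv : ∀ φ : X → ℝ, Continuous φ → HasCompactSupport φ →
        Tendsto (fun n => ∫ y, φ y ∂(μ n : Measure X)) atTop (nhds 0) := by
      intro φ hφ hφc
      obtain ⟨m, hm⟩ := E.exists_superset_of_isCompact (hφc.isCompact)
      obtain ⟨C, hC⟩ := hφc.exists_bound_of_continuous hφ
      have hC' : ∀ x, ‖φ x‖ ≤ max C 0 := fun x => (hC x).trans (le_max_left _ _)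
      refine squeeze_zero_norm' (a := fun n : ℕ => max C 0 * (1 / (n + 1))) ?_ ?_
      · filter_upwards [eventually_ge_atTop m] with n hn
        have h1 : ((μ n : Measure X) (tsupport φ)).toReal ≤ 1 / (n + 1) := by
          have h2 : (μ n : Measure X) (tsupport φ) ≤ ENNReal.ofReal (1 / (n + 1)) :=
            le_trans (measure_mono (hm.trans (E.subset hn))) (hμ1 n)
          calc ((μ n : Measure X) (tsupport φ)).toReal
              ≤ (ENNReal.ofReal (1 / (n + 1))).toReal :=
                ENNReal.toReal_mono ENNReal.ofReal_ne_top h2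
            _ = 1 / (n + 1) := ENNReal.toReal_ofReal (by positivity)
        calc ‖∫ y, φ y ∂(μ n : Measure X)‖
            ≤ max C 0 * ((μ n : Measure X) (tsupport φ)).toReal :=
              aux_int_le _ hφ hφc hC'
          _ ≤ max C 0 * (1 / (n + 1)) := by
              exact mul_le_mul_of_nonneg_left h1 (le_max_right _ _)
      · simpa using tendsto_one_div_add_atTop_nhds_zero_nat.const_mul (max C 0)
    have hmem : limsup (fun n => Φ (μ n)) atTop ∈
        {x : EReal | ∃ μ : ℕ → ProbabilityMeasure X,
          (∀ φ : X → ℝ, Continuous φ → HasCompactSupport φ →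
            Tendsto (fun n => ∫ y, φ y ∂(μ n : Measure X)) atTop (nhds 0)) ∧
          x = limsup (fun n => Φ (μ n)) atTop} := ⟨μ, hv, rfl⟩
    have hle : c ≤ limsup (fun n => Φ (μ n)) atTop :=
      le_limsup_of_frequently_le (Frequently.of_forall fun n => (hμ2 n).le)
        (by isBoundedDefault)
    exact absurd (hle.trans (le_sSup hmem)) (not_le.2 hcA)
  · exact iInf₂_comm _
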